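/- A grafting of a tree is a tree: if Δ' = ⟨G₁, …, G_s⟩ is a tree and Δ is a grafting of Δ' with simplices F₁, …, F_r, then Δ is a tree (assuming Δ is connected). -/
import Mathlib


open Finset

variable {α : Type*} [DecidableEq α]

/-- A set of vertices meeting every facet. -/
def IsVertexCover (Δ : Finset (Finset α)) (A : Finset α) : Prop :=
  ∀ F ∈ Δ, (A ∩ F).Nonempty

/-- A vertex cover none of whose proper subsets is a cover. -/
def IsMinimalVertexCover (Δ : Finset (Finset α)) (A : Finset α) : Prop :=
  IsVertexCover Δ A ∧ ∀ B ⊆ A, IsVertexCover Δ B → B = A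

/-- The vertex covering number α(Δ). -/
noncomputable def coverNum (Δ : Finset (Finset α)) : ℕ :=
  sInf {n | ∃ A : Finset α, IsVertexCover Δ A ∧ A.card = n}

/-- All minimal vertex covers have the same cardinality. -/
def Unmixed (Δ : Finset (Finset α)) : Prop :=
  ∀ A B : Finset α, IsMinimalVertexCover Δ A → IsMinimalVertexCover Δ B →
    A.card = B.card

/-- `F` is a leaf of `Δ`: it is the only facet, or some facet `G ≠ F`
satisfies `F ∩ F' ⊆ F ∩ G` for every facet `F' ≠ F`. -/
def IsLeaf (Δ : Finset (Finset α)) (F : Finset α) : Prop :=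
  F ∈ Δ ∧ (Δ = {F} ∨ ∃ G ∈ Δ, G ≠ F ∧ ∀ F' ∈ Δ, F' ≠ F → F ∩ F' ⊆ F ∩ G)

/-- `G` is a joint of the leaf `F` in `Δ`. -/
def IsJoint (Δ : Finset (Finset α)) (G F : Finset α) : Prop :=
  F ∈ Δ ∧ G ∈ Δ ∧ G ≠ F ∧ (∀ F' ∈ Δ, F' ≠ F → F ∩ F' ⊆ F ∩ G) ∧
    (F ∩ G).Nonempty

def HasLeaf (Δ : Finset (Finset α)) : Prop := ∃ F, IsLeaf Δ F

/-- Every nonempty subcollection has a leaf. -/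
def IsForest (Δ : Finset (Finset α)) : Prop :=
  ∀ Γ ⊆ Δ, Γ.Nonempty → HasLeaf Γ

/-- Any two facets are linked by a chain of facets with consecutive
nonempty intersections. -/
def ComplexConnected (Δ : Finset (Finset α)) : Prop :=
  ∀ F ∈ Δ, ∀ G ∈ Δ,
    Relation.ReflTransGen (fun A B => A ∈ Δ ∧ B ∈ Δ ∧ (A ∩ B).Nonempty) F G

def IsTree (Δ : Finset (Finset α)) : Prop := ComplexConnected Δ ∧ IsForest Δ

/-- An independent (pairwise disjoint) set of facets of `Δ`. -/
def IndependentFacets (Δ S : Finset (Finset α)) : Prop :=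
  S ⊆ Δ ∧ ∀ F ∈ S, ∀ G ∈ S, F ≠ G → F ∩ G = ∅

/-- The independence number β(Δ). -/
noncomputable def indepNum (Δ : Finset (Finset α)) : ℕ :=
  sSup {n | ∃ S : Finset (Finset α), IndependentFacets Δ S ∧ S.card = n}

/-- An independent set of facets not properly contained in another. -/
def MaximalIndependent (Δ S : Finset (Finset α)) : Prop :=
  IndependentFacets Δ S ∧ ∀ T, IndependentFacets Δ T → S ⊆ T → T = S

/-- `v` is a free vertex of the facet `F`: it belongs to no other facet. -/
def FreeVertex (Δ : Finset (Finset α)) (v : α) (F : Finset α) : Prop :=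
  F ∈ Δ ∧ v ∈ F ∧ ∀ G ∈ Δ, v ∈ G → G = F

/-- The facets form an antichain (they are the maximal faces). -/
def FacetAntichain (Δ : Finset (Finset α)) : Prop :=
  ∀ F ∈ Δ, ∀ G ∈ Δ, F ⊆ G → F = G

/-- `Δ` is a grafting of `Gs` with the pairwise-disjoint simplices `Fs`:
(i) every vertex of each `G ∈ Gs` lies in some `F ∈ Fs`; (ii) `Fs` is
exactly the set of leaves of `Δ`; (iii) `Fs` and `Gs` are disjoint;
(iv) the members of `Fs` are pairwise disjoint; (v) removing any joint
`G ∈ Gs` yields a grafted complex. -/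
def IsGrafted (Δ Fs Gs : Finset (Finset α)) : Prop :=
  Δ = Fs ∪ Gs ∧
  (∀ G ∈ Gs, ∀ v ∈ G, ∃ F ∈ Fs, v ∈ F) ∧
  (∀ F, F ∈ Fs ↔ IsLeaf Δ F) ∧
  Disjoint Fs Gs ∧
  (∀ F ∈ Fs, ∀ F' ∈ Fs, F ≠ F' → F ∩ F' = ∅) ∧
  (∀ G, G ∈ Δ → G ∈ Gs → (∃ F, IsJoint Δ G F) →
    ∃ Fs' Gs', IsGrafted (Δ.erase G) Fs' Gs')
termination_by Δ.card
decreasing_by exact Finset.card_erase_lt_of_mem (by assumption)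


/-- Key lemma: if `L ∈ Gs` is a leaf of `Δ.erase G` (for `G ∈ Gs`), then `L` is
already a leaf of `Δ`: every point of `L ∩ G` lies in some `F ∈ Fs`, which
survives the erasure, so the dominator of `L` in `Δ.erase G` also absorbs `L ∩ G`. -/
lemma isLeaf_of_isLeaf_erase {Δ Fs Gs : Finset (Finset α)} (hu : Δ = Fs ∪ Gs)
    (hcov : ∀ G ∈ Gs, ∀ v ∈ G, ∃ F ∈ Fs, v ∈ F)
    (hdisj : Disjoint Fs Gs) {G L : Finset α} (hG : G ∈ Gs) (hLg : L ∈ Gs)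
    (hL : IsLeaf (Δ.erase G) L) : IsLeaf Δ L := by
  obtain ⟨hLmem, hcase⟩ := hL
  have hLΔ : L ∈ Δ := Finset.mem_of_mem_erase hLmem
  have hLG : L ≠ G := Finset.ne_of_mem_erase hLmem
  have hGΔ : G ∈ Δ := by rw [hu]; exact Finset.mem_union_right _ hG
  refine ⟨hLΔ, Or.inr ?_⟩
  rcases hcase with hsing | ⟨H, hH, hHL, hdom⟩
  · refine ⟨G, hGΔ, Ne.symm hLG, fun X hX hXL => ?_⟩
    rcases eq_or_ne X G with rfl | hXG
    · exact fun x hx => hx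
    · have hXe : X ∈ Δ.erase G := Finset.mem_erase.2 ⟨hXG, hX⟩
      rw [hsing] at hXe
      exact absurd (Finset.mem_singleton.1 hXe) hXL
  · refine ⟨H, Finset.mem_of_mem_erase hH, hHL, fun X hX hXL => ?_⟩
    rcases eq_or_ne X G with rfl | hXG
    · intro w hw
      obtain ⟨hwL, hwX⟩ := Finset.mem_inter.1 hw
      obtain ⟨Fw, hFw, hwFw⟩ := hcov X hG w hwX
      have hFwG : Fw ≠ X := fun h => Finset.disjoint_left.1 hdisj hFw (h ▸ hG)
      have hFwL : Fw ≠ L := fun h => Finset.disjoint_left.1 hdisj hFw (h ▸ hLg)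
      have hFwe : Fw ∈ Δ.erase X :=
        Finset.mem_erase.2 ⟨hFwG, by rw [hu]; exact Finset.mem_union_left _ hFw⟩
      exact hdom Fw hFwe hFwL (Finset.mem_inter.2 ⟨hwL, hwFw⟩)
    · exact hdom X (Finset.mem_erase.2 ⟨hXG, hX⟩) hXL

/-- Main lemma: in a grafted complex, any nonempty subcollection containing a
member of `Fs` has a leaf.  Strong induction on the number of facets of `Δ`,
erasing a joint of the chosen `F ∈ Fs` via condition (v). -/
lemma hasLeaf_of_graft : ∀ (n : ℕ) (Δ Fs Gs : Finset (Finset α)), Δ.card ≤ n →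
    IsGrafted Δ Fs Gs → ∀ Γ, Γ ⊆ Δ → ∀ F, F ∈ Γ → F ∈ Fs → HasLeaf Γ := by
  intro n
  induction n with
  | zero =>
    intro Δ Fs Gs hcard _ Γ hΓ F hF _
    have hΔ : Δ = ∅ := Finset.card_eq_zero.1 (Nat.le_zero.1 hcard)
    exact absurd (hΓ hF) (by simp [hΔ])
  | succ n ih =>
    intro Δ Fs Gs hcard hg Γ hΓ F hFΓ hFFs
    have hg0 := hg
    rw [IsGrafted] at hg0
    obtain ⟨hu, hcov, hleafiff, hdisj, hpair, herase⟩ := hg0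
    by_cases hsing : Γ = {F}
    · exact ⟨F, hFΓ, Or.inl hsing⟩
    obtain ⟨E, hEΓ, hEF⟩ : ∃ E ∈ Γ, E ≠ F := by
      by_contra h
      push_neg at h
      exact hsing (Finset.eq_singleton_iff_unique_mem.2 ⟨hFΓ, fun x hx => h x hx⟩)
    obtain ⟨hFΔ, hc⟩ := (hleafiff F).1 hFFs
    rcases hc with hΔsing | ⟨G, hGΔ, hGF, hdom⟩
    · rw [hΔsing] at hΓ
      exact absurd (Finset.mem_singleton.1 (hΓ hEΓ)) hEF
    by_cases hGΓ : G ∈ Γ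
    · exact ⟨F, hFΓ, Or.inr ⟨G, hGΓ, hGF, fun F' hF' hne => hdom F' (hΓ hF') hne⟩⟩
    by_cases hFG : F ∩ G = ∅
    · refine ⟨F, hFΓ, Or.inr ⟨E, hEΓ, hEF, fun F' hF' hne => fun x hx => ?_⟩⟩
      exact absurd (hFG ▸ hdom F' (hΓ hF') hne hx) (Finset.notMem_empty x)
    have hFGne : (F ∩ G).Nonempty := Finset.nonempty_iff_ne_empty.2 hFG
    have hGGs : G ∈ Gs := by
      rcases Finset.mem_union.1 (hu ▸ hGΔ) with h | h
      · exact absurd (hpair F hFFs G h (Ne.symm hGF)) hFG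
      · exact h
    obtain ⟨Fs', Gs', hg'⟩ := herase G hGΔ hGGs ⟨F, hΓ hFΓ, hGΔ, hGF, hdom, hFGne⟩
    have hΓ' : Γ ⊆ Δ.erase G := fun x hx =>
      Finset.mem_erase.2 ⟨fun h => hGΓ (h ▸ hx), hΓ hx⟩
    have hg1 := hg'
    rw [IsGrafted] at hg1
    obtain ⟨hu', hcov', hleafiff', hdisj', hpair', _⟩ := hg1
    have hFe : F ∈ Δ.erase G := hΓ' hFΓ
    have hFFs' : F ∈ Fs' := by
      rcases Finset.mem_union.1 (hu' ▸ hFe) with h | h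
      · exact h
      · exfalso
        obtain ⟨v, hv⟩ := hFGne
        have hvF : v ∈ F := (Finset.mem_inter.1 hv).1
        obtain ⟨L, hLFs', hvL⟩ := hcov' F h v hvF
        have hLleaf' : IsLeaf (Δ.erase G) L := (hleafiff' L).1 hLFs'
        have hLΔ : L ∈ Δ := Finset.mem_of_mem_erase hLleaf'.1
        have hLF : L ≠ F := fun hLF => Finset.disjoint_left.1 hdisj' hLFs' (hLF ▸ h)
        rcases Finset.mem_union.1 (hu ▸ hLΔ) with hLFs | hLGs
        · have hvin : v ∈ L ∩ F := Finset.mem_inter.2 ⟨hvL, hvF⟩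
          rw [hpair L hLFs F hFFs hLF] at hvin
          exact Finset.notMem_empty v hvin
        · have hLFs : L ∈ Fs :=
            (hleafiff L).2 (isLeaf_of_isLeaf_erase hu hcov hdisj hGGs hLGs hLleaf')
          exact Finset.disjoint_left.1 hdisj hLFs hLGs
    have hcard' : (Δ.erase G).card ≤ n := by
      rw [Finset.card_erase_of_mem hGΔ]
      omega
    exact ih (Δ.erase G) Fs' Gs' hcard' hg' Γ hΓ' F hFΓ hFFs'

/-- A grafting of a tree is a tree. -/
theorem grafting_of_tree_is_tree (Δ Fs Gs : Finset (Finset α))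
    (hgraft : IsGrafted Δ Fs Gs) (htree : IsTree Gs)
    (hconn : ComplexConnected Δ) :
    IsTree Δ := by
  refine ⟨hconn, fun Γ hΓ hne => ?_⟩
  have hg0 := hgraft
  rw [IsGrafted] at hg0
  obtain ⟨hu, -, -, -, -, -⟩ := hg0
  by_cases h : ∃ F ∈ Γ, F ∈ Fs
  · obtain ⟨F, hF, hFFs⟩ := h
    exact hasLeaf_of_graft Δ.card Δ Fs Gs le_rfl hgraft Γ hΓ F hF hFFs
  · push_neg at h
    refine htree.2 Γ (fun x hx => ?_) hne
    rcases Finset.mem_union.1 (hu ▸ hΓ hx) with hx' | hx'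
    · exact absurd hx' (h x hx)
    · exact hx'
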